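/- arXiv:2108.07512 — 4 statements merged into one kernel-verified Lean document; each statement's English description precedes it below -/
import Mathlib

section
/- Let G be a topological group acting continuously on topological spaces X and Y, and let f : Y → X be a continuous G-equivariant map (f(g • y) = g • f(y) for all g ∈ G, y ∈ Y). Let x₀ ∈ X, let U be an open neighborhood of x₀, and let s : U → G be a continuous map with s(x) • x₀ = x for all x ∈ U. Then the map (x, y) ↦ s(x) • y is a homeomorphism from U × f⁻¹({x₀}) (product of subspace topologies) onto f⁻¹(U) (subspace topology), and composing it with f gives the projection (x, y) ↦ x. -/
/-- Palais: if the action of `G` on `X` admits a local cross-section `s` on a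
neighborhood `U` of `x₀`, then any continuous `G`-equivariant map `f : Y → X`
is trivial over `U`: `(x, y) ↦ s x • y` is a homeomorphism
`U × f⁻¹({x₀}) ≃ₜ f⁻¹(U)` over `U`. -/
theorem equivariant_map_locally_trivial
    {G X Y : Type*} [Group G] [TopologicalSpace G] [IsTopologicalGroup G]
    [TopologicalSpace X] [MulAction G X] [ContinuousSMul G X]
    [TopologicalSpace Y] [MulAction G Y] [ContinuousSMul G Y]
    (f : Y → X) (hf : Continuous f)
    (hequiv : ∀ (g : G) (y : Y), f (g • y) = g • f y)
    (x₀ : X) (U : Set X) (hU : IsOpen U) (hx₀ : x₀ ∈ U)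
    (s : U → G) (hs : Continuous s) (hsec : ∀ x : U, s x • x₀ = (x : X)) :
    ∃ Φ : (U × (f ⁻¹' {x₀})) ≃ₜ (f ⁻¹' U),
      (∀ (x : U) (y : f ⁻¹' {x₀}), (Φ (x, y) : Y) = s x • (y : Y)) ∧
      (∀ (x : U) (y : f ⁻¹' {x₀}), f (Φ (x, y) : Y) = (x : X)) := by
  have hfx : ∀ (x : U) (y : f ⁻¹' {x₀}), f (s x • (y : Y)) = (x : X) := by
    intro x y
    rw [hequiv]
    have hy : f (y : Y) = x₀ := y.2
    rw [hy, hsec]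
  refine ⟨{ toFun := fun p => ⟨s p.1 • (p.2 : Y), by
              show f _ ∈ U
              rw [hfx p.1 p.2]; exact p.1.2⟩
            invFun := fun z => (⟨f (z : Y), z.2⟩,
              ⟨(s ⟨f (z : Y), z.2⟩)⁻¹ • (z : Y), by
                show f _ ∈ ({x₀} : Set X)
                rw [hequiv]
                have := hsec ⟨f (z : Y), z.2⟩
                simp only [Set.mem_singleton_iff]
                exact inv_smul_eq_iff.mpr (hsec ⟨f (z : Y), z.2⟩).symm⟩)
            left_inv := by
              rintro ⟨x, y⟩
              have h1 : f (s x • (y : Y)) = (x : X) := hfx x y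
              have hx' : ∀ (a : U), a = x →
                  ∀ (b : f ⁻¹' {x₀}), (b : Y) = (s a)⁻¹ • s x • (y : Y) →
                  ((a, b) : U × (f ⁻¹' {x₀})) = (x, y) := by
                rintro a rfl b hb
                ext
                · rfl
                · rw [hb, inv_smul_smul]
              exact hx' _ (Subtype.ext h1) _ rfl
            right_inv := by
              rintro ⟨z, hz⟩
              ext
              simp [smul_inv_smul]
            continuous_toFun := by
              apply Continuous.subtype_mk
              exact (hs.comp continuous_fst).smul
                (continuous_subtype_val.comp continuous_snd)
            continuous_invFun := by
              have h1 : Continuous fun z : f ⁻¹' U => (⟨f (z : Y), z.2⟩ : U) :=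
                Continuous.subtype_mk (hf.comp continuous_subtype_val) _
              apply Continuous.prodMk h1
              apply Continuous.subtype_mk
              exact ((hs.comp h1).inv).smul continuous_subtype_val },
    ?_, ?_⟩
  · intro x y; rfl
  · intro x y; exact hfx x y
end

section
/- Let n ≥ 1, let 0 = t₀ < t₁ < ⋯ < t_n = 1 and 0 = s₀ < s₁ < ⋯ < s_n = 1 be partitions of [0,1], and let f, g : [0,1] → ℝ be continuous functions such that for each i ∈ {1,…,n}, f is strictly monotone on [t_{i−1}, t_i] and g is strictly monotone on [s_{i−1}, s_i], and f(t_i) = g(s_i) for all i ∈ {0,…,n}. Then there exists a strictly increasing continuous bijection φ : [0,1] → [0,1] (hence a homeomorphism) such that φ(s_i) = t_i for all i and f(φ(x)) = g(x) for all x ∈ [0,1]. -/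
private lemma part_lt' {n : ℕ} {t : ℕ → ℝ} (h : ∀ i < n, t i < t (i + 1)) :
    ∀ j, ∀ i < j, j ≤ n → t i < t j := by
  intro j
  induction j with
  | zero => omega
  | succ j ih =>
    intro i hij hjn
    rcases Nat.lt_succ_iff_lt_or_eq.mp hij with h' | h'
    · exact (ih i h' (by omega)).trans (h j (by omega))
    · subst h'; exact h i (by omega)

private lemma part_le' {n : ℕ} {t : ℕ → ℝ} (h : ∀ i < n, t i < t (i + 1)) :
    ∀ i j, i ≤ j → j ≤ n → t i ≤ t j := by
  intro i j hij hjn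
  rcases hij.lt_or_eq with h' | h'
  · exact (part_lt' h j i h' hjn).le
  · subst h'; exact le_rfl

private lemma part_cover {n : ℕ} (hn : 1 ≤ n) {t : ℕ → ℝ} (ht0 : t 0 = 0) (htn : t n = 1)
    (h : ∀ i < n, t i < t (i + 1)) {x : ℝ} (hx : x ∈ Set.Icc (0 : ℝ) 1) :
    ∃ i < n, x ∈ Set.Icc (t i) (t (i + 1)) := by
  classical
  have hP0 : (fun i => t i ≤ x) 0 := by simpa [ht0] using hx.1
  have hkP : t (Nat.findGreatest (fun i => t i ≤ x) (n - 1)) ≤ x :=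
    Nat.findGreatest_spec (P := fun i => t i ≤ x) (Nat.zero_le _) hP0
  have hkle : Nat.findGreatest (fun i => t i ≤ x) (n - 1) ≤ n - 1 := Nat.findGreatest_le _
  refine ⟨_, by omega, hkP, ?_⟩
  rcases eq_or_lt_of_le hkle with he | hl
  · rw [(by omega : Nat.findGreatest (fun i => t i ≤ x) (n - 1) + 1 = n), htn]
    exact hx.2
  · have hng : ¬ ((fun i => t i ≤ x) (Nat.findGreatest (fun i => t i ≤ x) (n - 1) + 1)) :=
      Nat.findGreatest_is_greatest (P := fun i => t i ≤ x) (n := n - 1)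
        (Nat.lt_succ_self _) (by omega)
    exact (lt_of_not_ge hng).le

private def RepQ (n : ℕ) (t s : ℕ → ℝ) (f g : ℝ → ℝ) (x y : ℝ) : Prop :=
  ∃ i, i < n ∧ x ∈ Set.Icc (s i) (s (i + 1)) ∧ y ∈ Set.Icc (t i) (t (i + 1)) ∧ f y = g x

/-- Two continuous functions on `[0,1]`, piecewise strictly monotone with
respect to partitions of the same length and with matching values at the
partition points, differ by precomposition with a strictly increasing
homeomorphism of `[0,1]` matching the partitions. -/
theorem exists_reparametrization_interval
    (n : ℕ) (hn : 1 ≤ n) (t s : ℕ → ℝ)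
    (ht0 : t 0 = 0) (htn : t n = 1) (hs0 : s 0 = 0) (hsn : s n = 1)
    (htmono : ∀ i < n, t i < t (i + 1)) (hsmono : ∀ i < n, s i < s (i + 1))
    (f g : ℝ → ℝ)
    (hf : ContinuousOn f (Set.Icc 0 1)) (hg : ContinuousOn g (Set.Icc 0 1))
    (hfmono : ∀ i < n, StrictMonoOn f (Set.Icc (t i) (t (i + 1))) ∨
      StrictAntiOn f (Set.Icc (t i) (t (i + 1))))
    (hgmono : ∀ i < n, StrictMonoOn g (Set.Icc (s i) (s (i + 1))) ∨
      StrictAntiOn g (Set.Icc (s i) (s (i + 1))))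
    (hmatch : ∀ i ≤ n, f (t i) = g (s i)) :
    ∃ φ : ℝ → ℝ,
      StrictMonoOn φ (Set.Icc 0 1) ∧
      ContinuousOn φ (Set.Icc 0 1) ∧
      Set.BijOn φ (Set.Icc 0 1) (Set.Icc 0 1) ∧
      (∀ i ≤ n, φ (s i) = t i) ∧
      (∀ x ∈ Set.Icc (0 : ℝ) 1, f (φ x) = g x) := by
  classical
  have tle := part_le' htmono
  have sle := part_le' hsmono
  have tlt := fun i j (h1 : i < j) (h2 : j ≤ n) => part_lt' htmono j i h1 h2
  have slt := fun i j (h1 : i < j) (h2 : j ≤ n) => part_lt' hsmono j i h1 h2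
  have tmem : ∀ i ≤ n, t i ∈ Set.Icc (0 : ℝ) 1 := fun i hi =>
    ⟨ht0 ▸ tle 0 i (Nat.zero_le _) hi, htn ▸ tle i n hi le_rfl⟩
  have smem : ∀ i ≤ n, s i ∈ Set.Icc (0 : ℝ) 1 := fun i hi =>
    ⟨hs0 ▸ sle 0 i (Nat.zero_le _) hi, hsn ▸ sle i n hi le_rfl⟩
  have hsubt : ∀ i < n, Set.Icc (t i) (t (i + 1)) ⊆ Set.Icc (0 : ℝ) 1 := fun i hi =>
    Set.Icc_subset_Icc (tmem i hi.le).1 (tmem (i + 1) hi).2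
  have hsubs : ∀ i < n, Set.Icc (s i) (s (i + 1)) ⊆ Set.Icc (0 : ℝ) 1 := fun i hi =>
    Set.Icc_subset_Icc (smem i hi.le).1 (smem (i + 1) hi).2
  have finj : ∀ i < n, Set.InjOn f (Set.Icc (t i) (t (i + 1))) := fun i hi =>
    (hfmono i hi).elim StrictMonoOn.injOn StrictAntiOn.injOn
  have ginj : ∀ i < n, Set.InjOn g (Set.Icc (s i) (s (i + 1))) := fun i hi =>
    (hgmono i hi).elim StrictMonoOn.injOn StrictAntiOn.injOn
  -- matching directions
  have dir : ∀ i < n,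
      (StrictMonoOn f (Set.Icc (t i) (t (i + 1))) ∧
        StrictMonoOn g (Set.Icc (s i) (s (i + 1)))) ∨
      (StrictAntiOn f (Set.Icc (t i) (t (i + 1))) ∧
        StrictAntiOn g (Set.Icc (s i) (s (i + 1)))) := by
    intro i hi
    have hti := htmono i hi
    have hsi := hsmono i hi
    have e1 := hmatch i hi.le
    have e2 := hmatch (i + 1) hi
    have mtl : t i ∈ Set.Icc (t i) (t (i + 1)) := Set.left_mem_Icc.mpr hti.le
    have mtr : t (i + 1) ∈ Set.Icc (t i) (t (i + 1)) := Set.right_mem_Icc.mpr hti.le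
    have msl : s i ∈ Set.Icc (s i) (s (i + 1)) := Set.left_mem_Icc.mpr hsi.le
    have msr : s (i + 1) ∈ Set.Icc (s i) (s (i + 1)) := Set.right_mem_Icc.mpr hsi.le
    rcases hfmono i hi with hF | hF <;> rcases hgmono i hi with hG | hG
    · exact Or.inl ⟨hF, hG⟩
    · exfalso
      have h1 := hF mtl mtr hti
      have h2 := hG msl msr hsi
      rw [e1, e2] at h1; linarith
    · exfalso
      have h1 := hF mtl mtr hti
      have h2 := hG msl msr hsi
      rw [e1, e2] at h1; linarith
    · exact Or.inr ⟨hF, hG⟩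
  -- uniqueness of the solution
  have key : ∀ x y₁ y₂ i j, i ≤ j → j < n →
      x ∈ Set.Icc (s i) (s (i + 1)) → y₁ ∈ Set.Icc (t i) (t (i + 1)) → f y₁ = g x →
      x ∈ Set.Icc (s j) (s (j + 1)) → y₂ ∈ Set.Icc (t j) (t (j + 1)) → f y₂ = g x →
      y₁ = y₂ := by
    intro x y₁ y₂ i j hij hjn hxi hyi hfi hxj hyj hfj
    rcases hij.lt_or_eq with hlt | rfl
    · have hj : j = i + 1 := by
        by_contra hne
        have h1 : s (i + 1) < s j := slt (i + 1) j (by omega) hjn.le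
        have := hxi.2
        have := hxj.1
        linarith
      subst hj
      have hin : i < n := by omega
      have hx : x = s (i + 1) := le_antisymm hxi.2 hxj.1
      have hy1 : y₁ = t (i + 1) := by
        apply finj i hin hyi (Set.right_mem_Icc.mpr (htmono i hin).le)
        rw [hfi, hx, hmatch (i + 1) hjn.le]
      have hy2 : y₂ = t (i + 1) := by
        apply finj (i + 1) hjn hyj (Set.left_mem_Icc.mpr (htmono (i + 1) hjn).le)
        rw [hfj, hx, hmatch (i + 1) hjn.le]
      rw [hy1, hy2]
    · exact finj i hjn hyi hyj (hfi.trans hfj.symm)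
  have Quniq : ∀ x y₁ y₂, RepQ n t s f g x y₁ → RepQ n t s f g x y₂ → y₁ = y₂ := by
    rintro x y₁ y₂ ⟨i, hi, hxi, hyi, hfi⟩ ⟨j, hj, hxj, hyj, hfj⟩
    rcases le_total i j with h | h
    · exact key x y₁ y₂ i j h hj hxi hyi hfi hxj hyj hfj
    · exact (key x y₂ y₁ j i h hi hxj hyj hfj hxi hyi hfi).symm
  -- existence of the solution
  have Qex : ∀ x ∈ Set.Icc (0 : ℝ) 1, ∃ y, RepQ n t s f g x y := by
    intro x hx
    obtain ⟨i, hi, hxi⟩ := part_cover hn hs0 hsn hsmono hx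
    have hti := htmono i hi
    have hsi := hsmono i hi
    have e1 := hmatch i hi.le
    have e2 := hmatch (i + 1) hi
    have hfc : ContinuousOn f (Set.Icc (t i) (t (i + 1))) := hf.mono (hsubt i hi)
    have msl : s i ∈ Set.Icc (s i) (s (i + 1)) := Set.left_mem_Icc.mpr hsi.le
    have msr : s (i + 1) ∈ Set.Icc (s i) (s (i + 1)) := Set.right_mem_Icc.mpr hsi.le
    rcases dir i hi with ⟨hF, hG⟩ | ⟨hF, hG⟩
    · have h1 : g (s i) ≤ g x := hG.monotoneOn msl hxi hxi.1
      have h2 : g x ≤ g (s (i + 1)) := hG.monotoneOn hxi msr hxi.2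
      have hmem : g x ∈ Set.Icc (f (t i)) (f (t (i + 1))) := by
        rw [Set.mem_Icc, e1, e2]; exact ⟨h1, h2⟩
      obtain ⟨y, hy, hfy⟩ := intermediate_value_Icc hti.le hfc hmem
      exact ⟨y, i, hi, hxi, hy, hfy⟩
    · have h1 : g (s (i + 1)) ≤ g x := hG.antitoneOn hxi msr hxi.2
      have h2 : g x ≤ g (s i) := hG.antitoneOn msl hxi hxi.1
      have hmem : g x ∈ Set.Icc (f (t (i + 1))) (f (t i)) := by
        rw [Set.mem_Icc, e1, e2]; exact ⟨h1, h2⟩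
      obtain ⟨y, hy, hfy⟩ := intermediate_value_Icc' hti.le hfc hmem
      exact ⟨y, i, hi, hxi, hy, hfy⟩
  -- define φ
  have Qex' : ∀ x : ℝ, ∃ y, x ∈ Set.Icc (0 : ℝ) 1 → RepQ n t s f g x y := by
    intro x
    by_cases hx : x ∈ Set.Icc (0 : ℝ) 1
    · exact (Qex x hx).imp fun y hy _ => hy
    · exact ⟨0, fun h => absurd h hx⟩
  choose φ hφ using Qex'
  have hQφ : ∀ x ∈ Set.Icc (0 : ℝ) 1, RepQ n t s f g x (φ x) := fun x hx => hφ x hx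
  have hfφ : ∀ x ∈ Set.Icc (0 : ℝ) 1, f (φ x) = g x := by
    intro x hx
    obtain ⟨i, hi, _, _, hfy⟩ := hQφ x hx
    exact hfy
  -- φ maps partition points to partition points
  have hφs : ∀ i ≤ n, φ (s i) = t i := by
    intro i hi
    have hsm := smem i hi
    refine Quniq (s i) (φ (s i)) (t i) (hQφ _ hsm) ?_
    rcases lt_or_eq_of_le hi with hlt | heq
    · exact ⟨i, hlt, Set.left_mem_Icc.mpr (hsmono i hlt).le,
        Set.left_mem_Icc.mpr (htmono i hlt).le, hmatch i hi⟩
    · rw [heq]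
      have hm : n - 1 + 1 = n := by omega
      have hm1 : n - 1 < n := by omega
      refine ⟨n - 1, hm1, ?_, ?_, hmatch n le_rfl⟩
      · rw [hm]; exact Set.right_mem_Icc.mpr (sle (n - 1) n (by omega) le_rfl)
      · rw [hm]; exact Set.right_mem_Icc.mpr (tle (n - 1) n (by omega) le_rfl)
  -- strict monotonicity
  have hφmono : StrictMonoOn φ (Set.Icc (0 : ℝ) 1) := by
    intro x₁ hx₁ x₂ hx₂ h12
    obtain ⟨i, hi, hxi, hyi, hfi⟩ := hQφ x₁ hx₁
    obtain ⟨j, hj, hxj, hyj, hfj⟩ := hQφ x₂ hx₂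
    have hij : i ≤ j := by
      by_contra hc
      push_neg at hc
      have h1 : s (j + 1) ≤ s i := sle (j + 1) i (by omega) hi.le
      have := hxj.2
      have := hxi.1
      linarith
    rcases hij.lt_or_eq with hlt | rfl
    · have h1 : φ x₁ ≤ t (i + 1) := hyi.2
      have h2 : t j ≤ φ x₂ := hyj.1
      rcases Nat.lt_or_ge (i + 1) j with hj2 | hj2
      · exact lt_of_le_of_lt h1 (lt_of_lt_of_le (tlt (i + 1) j hj2 hj.le) h2)
      · have hj1 : j = i + 1 := by omega
        subst hj1
        rcases lt_or_eq_of_le (h1.trans h2) with h | h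
        · exact h
        · exfalso
          have e1 : φ x₁ = t (i + 1) := le_antisymm h1 (by linarith)
          have e2 : φ x₂ = t (i + 1) := le_antisymm (by linarith) h2
          have hx1e : x₁ = s (i + 1) := by
            apply ginj i hi hxi (Set.right_mem_Icc.mpr (hsmono i hi).le)
            rw [← hfi, e1, hmatch (i + 1) hj.le]
          have hx2e : x₂ = s (i + 1) := by
            apply ginj (i + 1) hj hxj (Set.left_mem_Icc.mpr (hsmono (i + 1) hj).le)
            rw [← hfj, e2, hmatch (i + 1) hj.le]
          rw [hx1e, hx2e] at h12
          exact lt_irrefl _ h12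
    · rcases dir i hi with ⟨hF, hG⟩ | ⟨hF, hG⟩
      · have hg12 : g x₁ < g x₂ := hG hxi hxj h12
        have hff : f (φ x₁) < f (φ x₂) := by rw [hfi, hfj]; exact hg12
        by_contra hc
        push_neg at hc
        exact absurd (hF.monotoneOn hyj hyi hc) (not_le.mpr hff)
      · have hg12 : g x₂ < g x₁ := hG hxi hxj h12
        have hff : f (φ x₂) < f (φ x₁) := by rw [hfi, hfj]; exact hg12
        by_contra hc
        push_neg at hc
        exact absurd (hF.antitoneOn hyj hyi hc) (not_le.mpr hff)
  -- maps to and surjectivity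
  have hmaps : Set.MapsTo φ (Set.Icc (0 : ℝ) 1) (Set.Icc (0 : ℝ) 1) := by
    intro x hx
    obtain ⟨i, hi, _, hyi, _⟩ := hQφ x hx
    exact hsubt i hi hyi
  have hsurj : Set.SurjOn φ (Set.Icc (0 : ℝ) 1) (Set.Icc (0 : ℝ) 1) := by
    intro y hy
    obtain ⟨i, hi, hyi⟩ := part_cover hn ht0 htn htmono hy
    have hgc : ContinuousOn g (Set.Icc (s i) (s (i + 1))) := hg.mono (hsubs i hi)
    have hsi := hsmono i hi
    have hti := htmono i hi
    have e1 := hmatch i hi.le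
    have e2 := hmatch (i + 1) hi
    have mtl : t i ∈ Set.Icc (t i) (t (i + 1)) := Set.left_mem_Icc.mpr hti.le
    have mtr : t (i + 1) ∈ Set.Icc (t i) (t (i + 1)) := Set.right_mem_Icc.mpr hti.le
    obtain ⟨x, hx, hgx⟩ : ∃ x ∈ Set.Icc (s i) (s (i + 1)), g x = f y := by
      rcases dir i hi with ⟨hF, hG⟩ | ⟨hF, hG⟩
      · have h1 : f (t i) ≤ f y := hF.monotoneOn mtl hyi hyi.1
        have h2 : f y ≤ f (t (i + 1)) := hF.monotoneOn hyi mtr hyi.2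
        have hmem : f y ∈ Set.Icc (g (s i)) (g (s (i + 1))) := by
          rw [Set.mem_Icc, ← e1, ← e2]; exact ⟨h1, h2⟩
        obtain ⟨x, hx, hgx⟩ := intermediate_value_Icc hsi.le hgc hmem
        exact ⟨x, hx, hgx⟩
      · have h1 : f (t (i + 1)) ≤ f y := hF.antitoneOn hyi mtr hyi.2
        have h2 : f y ≤ f (t i) := hF.antitoneOn mtl hyi hyi.1
        have hmem : f y ∈ Set.Icc (g (s (i + 1))) (g (s i)) := by
          rw [Set.mem_Icc, ← e1, ← e2]; exact ⟨h1, h2⟩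
        obtain ⟨x, hx, hgx⟩ := intermediate_value_Icc' hsi.le hgc hmem
        exact ⟨x, hx, hgx⟩
    have hxmem : x ∈ Set.Icc (0 : ℝ) 1 := hsubs i hi hx
    have hQxy : RepQ n t s f g x y := ⟨i, hi, hx, hyi, hgx.symm⟩
    exact ⟨x, hxmem, Quniq x (φ x) y (hQφ x hxmem) hQxy⟩
  -- continuity
  have hcont : ContinuousOn φ (Set.Icc (0 : ℝ) 1) := by
    let Φ : Set.Icc (0 : ℝ) 1 → Set.Icc (0 : ℝ) 1 := fun x => ⟨φ x, hmaps x.2⟩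
    have hΦmono : StrictMono Φ := fun a b hab =>
      Subtype.mk_lt_mk.mpr (hφmono a.2 b.2 (Subtype.coe_lt_coe.mpr hab))
    have hΦsurj : Function.Surjective Φ := by
      intro y
      obtain ⟨x, hx, hxy⟩ := hsurj y.2
      exact ⟨⟨x, hx⟩, Subtype.ext hxy⟩
    have hiso := (StrictMono.orderIsoOfSurjective Φ hΦmono hΦsurj).continuous
    have hΦcont : Continuous Φ := by
      rwa [StrictMono.coe_orderIsoOfSurjective] at hiso
    rw [continuousOn_iff_continuous_restrict]
    have hres : (Set.Icc (0 : ℝ) 1).restrict φ =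
        (fun y : Set.Icc (0 : ℝ) 1 => (y : ℝ)) ∘ Φ := rfl
    change Continuous ((fun y : Set.Icc (0 : ℝ) 1 => (y : ℝ)) ∘ Φ)
    exact continuous_subtype_val.comp hΦcont
  exact ⟨φ, hφmono, hcont, ⟨hmaps, hφmono.injOn, hsurj⟩, hφs, hfφ⟩
end

section
/- Let n ≥ 1, let 0 = t₀ < t₁ < ⋯ < t_n = 1 be a partition of [0,1], and let f : [0,1] → ℝ be continuous and strictly monotone on each subinterval [t_{i−1}, t_i]. If φ : [0,1] → [0,1] is a strictly increasing continuous bijection with f ∘ φ = f, then φ is the identity map of [0,1]. -/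
/-- Index-finding lemma (strict below, weak above). -/
lemma exists_idx_lt_le (t : ℕ → ℝ) (b : ℝ) :
    ∀ n : ℕ, t 0 < b → b ≤ t n → ∃ i < n, t i < b ∧ b ≤ t (i + 1) := by
  intro n
  induction n with
  | zero => intro h1 h2; exact absurd (lt_of_lt_of_le h1 h2) (lt_irrefl _)
  | succ m ih =>
    intro h1 h2
    by_cases h : b ≤ t m
    · obtain ⟨i, hi, h3⟩ := ih h1 h
      exact ⟨i, Nat.lt_succ_of_lt hi, h3⟩
    · exact ⟨m, Nat.lt_succ_self m, lt_of_not_ge h, h2⟩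

/-- Index-finding lemma (weak below, strict above). -/
lemma exists_idx_le_lt (t : ℕ → ℝ) (b : ℝ) :
    ∀ n : ℕ, t 0 ≤ b → b < t n → ∃ i < n, t i ≤ b ∧ b < t (i + 1) := by
  intro n
  induction n with
  | zero => intro h1 h2; exact absurd (lt_of_le_of_lt h1 h2) (lt_irrefl _)
  | succ m ih =>
    intro h1 h2
    by_cases h : b < t m
    · obtain ⟨i, hi, h3⟩ := ih h1 h
      exact ⟨i, Nat.lt_succ_of_lt hi, h3⟩
    · exact ⟨m, Nat.lt_succ_self m, le_of_not_gt h, h2⟩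

/-- A strictly increasing continuous self-bijection of `[0,1]` stabilizing a
piecewise strictly monotone continuous function is the identity. -/
theorem stabilizer_trivial_interval
    (n : ℕ) (hn : 1 ≤ n) (t : ℕ → ℝ)
    (ht0 : t 0 = 0) (htn : t n = 1)
    (htmono : ∀ i < n, t i < t (i + 1))
    (f : ℝ → ℝ) (hf : ContinuousOn f (Set.Icc 0 1))
    (hfmono : ∀ i < n, StrictMonoOn f (Set.Icc (t i) (t (i + 1))) ∨
      StrictAntiOn f (Set.Icc (t i) (t (i + 1))))
    (φ : ℝ → ℝ)
    (hφmono : StrictMonoOn φ (Set.Icc 0 1))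
    (hφcont : ContinuousOn φ (Set.Icc 0 1))
    (hφbij : Set.BijOn φ (Set.Icc 0 1) (Set.Icc 0 1))
    (hcomp : ∀ x ∈ Set.Icc (0 : ℝ) 1, f (φ x) = f x) :
    ∀ x ∈ Set.Icc (0 : ℝ) 1, φ x = x := by
  have h01 : (0:ℝ) ≤ 1 := zero_le_one
  have h0m : (0:ℝ) ∈ Set.Icc (0:ℝ) 1 := Set.left_mem_Icc.2 h01
  have h1m : (1:ℝ) ∈ Set.Icc (0:ℝ) 1 := Set.right_mem_Icc.2 h01
  have hmaps := hφbij.mapsTo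
  -- φ 0 = 0
  have hφ0 : φ 0 = 0 := by
    obtain ⟨y, hy, hyeq⟩ := hφbij.surjOn h0m
    have h1 : φ 0 ≤ φ y := hφmono.monotoneOn h0m hy hy.1
    have h2 : (0:ℝ) ≤ φ 0 := (hmaps h0m).1
    rw [hyeq] at h1
    linarith
  -- φ 1 = 1
  have hφ1 : φ 1 = 1 := by
    obtain ⟨y, hy, hyeq⟩ := hφbij.surjOn h1m
    have h1 : φ y ≤ φ 1 := hφmono.monotoneOn hy h1m hy.2
    have h2 : φ 1 ≤ 1 := (hmaps h1m).2
    rw [hyeq] at h1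
    linarith
  intro x hx
  by_contra hne
  rcases lt_or_gt_of_ne hne with hlt | hgt
  · -- Case φ x < x : look at fixed points below x
    set S : Set ℝ := Set.Icc (0:ℝ) x ∩ (fun z => φ z - z) ⁻¹' {0} with hS
    have hScl : IsClosed S := by
      apply ContinuousOn.preimage_isClosed_of_isClosed
      · exact ((hφcont.mono (Set.Icc_subset_Icc le_rfl hx.2)).sub continuousOn_id)
      · exact isClosed_Icc
      · exact isClosed_singleton
    have h0S : (0:ℝ) ∈ S := by
      constructor
      · exact Set.left_mem_Icc.2 hx.1
      · simp [hφ0]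
    have hSne : S.Nonempty := ⟨0, h0S⟩
    have hSbdd : BddAbove S := ⟨x, fun z hz => hz.1.2⟩
    set b := sSup S with hb
    have hbS : b ∈ S := hScl.csSup_mem hSne hSbdd
    have hφb : φ b = b := by have := hbS.2; simp at this; linarith
    have hb0 : (0:ℝ) ≤ b := hbS.1.1
    have hbx : b ≤ x := hbS.1.2
    have hbltx : b < x := by
      rcases lt_or_eq_of_le hbx with h | h
      · exact h
      · exfalso; rw [h] at hφb; exact hne hφb
    have hbIcc : b ∈ Set.Icc (0:ℝ) 1 := ⟨hb0, le_trans hbx hx.2⟩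
    -- φ z < z for b < z ≤ x
    have hstep : ∀ z, b < z → z ≤ x → φ z < z := by
      intro z hz1 hz2
      by_contra h
      push_neg at h
      rcases eq_or_lt_of_le h with heq | hlt'
      · have : z ∈ S := ⟨⟨le_trans hb0 hz1.le, hz2⟩, by simp [← heq]⟩
        exact absurd (le_csSup hSbdd this) (not_le.2 hz1)
      · -- φ z > z, φ x < x: IVT on [z,x] gives a fixed point > b
        have hzIcc : z ∈ Set.Icc (0:ℝ) 1 := ⟨le_trans hb0 hz1.le, le_trans hz2 hx.2⟩
        have hzx : z ≤ x := hz2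
        have hcont : ContinuousOn (fun w => φ w - w) (Set.Icc z x) :=
          (hφcont.mono (Set.Icc_subset_Icc hzIcc.1 hx.2)).sub continuousOn_id
        have h0mem : (0:ℝ) ∈ Set.Icc (φ x - x) (φ z - z) := ⟨by linarith, by linarith⟩
        obtain ⟨w, hw, hweq⟩ := intermediate_value_Icc' hzx hcont h0mem
        have hwS : w ∈ S := ⟨⟨le_trans hzIcc.1 hw.1, hw.2⟩, by simpa using hweq⟩
        have : w ≤ b := le_csSup hSbdd hwS
        linarith [hw.1]
    -- find the subinterval containing b on the right
    have hbt : b < t n := by rw [htn]; exact lt_of_lt_of_le hbltx hx.2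
    obtain ⟨i, hi, htib, hbti⟩ := exists_idx_le_lt t b n (by rw [ht0]; exact hb0) hbt
    set c := (b + min x (t (i + 1))) / 2 with hc
    have hbmin : b < min x (t (i + 1)) := lt_min hbltx hbti
    have hbc : b < c := by simp only [hc]; linarith
    have hcmin : c < min x (t (i + 1)) := by simp only [hc]; linarith
    have hcx : c < x := lt_of_lt_of_le hcmin (min_le_left _ _)
    have hcti : c < t (i + 1) := lt_of_lt_of_le hcmin (min_le_right _ _)
    have hcIcc : c ∈ Set.Icc (0:ℝ) 1 := ⟨le_trans hb0 hbc.le, le_trans hcx.le hx.2⟩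
    have hφc : φ c < c := hstep c hbc hcx.le
    have hφcb : b < φ c := by
      have := hφmono hbIcc hcIcc hbc
      rwa [hφb] at this
    have hcmem : c ∈ Set.Icc (t i) (t (i + 1)) := ⟨le_trans htib hbc.le, hcti.le⟩
    have hφcmem : φ c ∈ Set.Icc (t i) (t (i + 1)) :=
      ⟨le_trans htib hφcb.le, le_trans hφc.le hcti.le⟩
    have hfeq : f (φ c) = f c := hcomp c hcIcc
    rcases hfmono i hi with hm | hm
    · exact absurd hfeq (ne_of_lt (hm hφcmem hcmem hφc))
    · exact absurd hfeq (ne_of_gt (hm hφcmem hcmem hφc))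
  · -- Case φ x > x : fixed points above x
    set S : Set ℝ := Set.Icc x 1 ∩ (fun z => φ z - z) ⁻¹' {0} with hS
    have hScl : IsClosed S := by
      apply ContinuousOn.preimage_isClosed_of_isClosed
      · exact ((hφcont.mono (Set.Icc_subset_Icc hx.1 le_rfl)).sub continuousOn_id)
      · exact isClosed_Icc
      · exact isClosed_singleton
    have h1S : (1:ℝ) ∈ S := by
      constructor
      · exact Set.right_mem_Icc.2 hx.2
      · simp [hφ1]
    have hSne : S.Nonempty := ⟨1, h1S⟩
    have hSbdd : BddBelow S := ⟨x, fun z hz => hz.1.1⟩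
    set b := sInf S with hb
    have hbS : b ∈ S := hScl.csInf_mem hSne hSbdd
    have hφb : φ b = b := by have := hbS.2; simp at this; linarith
    have hbx : x ≤ b := hbS.1.1
    have hb1 : b ≤ 1 := hbS.1.2
    have hbgtx : x < b := by
      rcases lt_or_eq_of_le hbx with h | h
      · exact h
      · exfalso; rw [← h] at hφb; exact hne hφb
    have hbIcc : b ∈ Set.Icc (0:ℝ) 1 := ⟨le_trans hx.1 hbx, hb1⟩
    -- φ z > z for x ≤ z < b
    have hstep : ∀ z, x ≤ z → z < b → z < φ z := by
      intro z hz1 hz2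
      by_contra h
      push_neg at h
      rcases eq_or_lt_of_le h with heq | hlt'
      · have : z ∈ S := ⟨⟨hz1, le_trans hz2.le hb1⟩, by simp [heq]⟩
        exact absurd (csInf_le hSbdd this) (not_le.2 hz2)
      · have hzIcc : z ∈ Set.Icc (0:ℝ) 1 := ⟨le_trans hx.1 hz1, le_trans hz2.le hb1⟩
        have hcont : ContinuousOn (fun w => φ w - w) (Set.Icc x z) :=
          (hφcont.mono (Set.Icc_subset_Icc hx.1 hzIcc.2)).sub continuousOn_id
        have h0mem : (0:ℝ) ∈ Set.Icc (φ z - z) (φ x - x) := ⟨by linarith, by linarith⟩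
        obtain ⟨w, hw, hweq⟩ := intermediate_value_Icc' hz1 hcont h0mem
        have hwS : w ∈ S := ⟨⟨hw.1, le_trans hw.2 hzIcc.2⟩, by simpa using hweq⟩
        have : b ≤ w := csInf_le hSbdd hwS
        linarith [hw.2]
    -- find the subinterval with b in its interior from the left
    have hbt : t 0 < b := by rw [ht0]; exact lt_of_le_of_lt hx.1 hbgtx
    obtain ⟨i, hi, htib, hbti⟩ := exists_idx_lt_le t b n hbt (by rw [htn]; exact hb1)
    set c := (max x (t i) + b) / 2 with hc
    have hmaxb : max x (t i) < b := max_lt hbgtx htib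
    have hcb : c < b := by simp only [hc]; linarith
    have hmaxc : max x (t i) < c := by simp only [hc]; linarith
    have hxc : x < c := lt_of_le_of_lt (le_max_left _ _) hmaxc
    have htic : t i < c := lt_of_le_of_lt (le_max_right _ _) hmaxc
    have hcIcc : c ∈ Set.Icc (0:ℝ) 1 := ⟨le_trans hx.1 hxc.le, le_trans hcb.le hb1⟩
    have hφc : c < φ c := hstep c hxc.le hcb
    have hφcb : φ c < b := by
      have := hφmono hcIcc hbIcc hcb
      rwa [hφb] at this
    have hcmem : c ∈ Set.Icc (t i) (t (i + 1)) := ⟨htic.le, le_trans hcb.le hbti⟩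
    have hφcmem : φ c ∈ Set.Icc (t i) (t (i + 1)) :=
      ⟨le_trans htic.le hφc.le, le_trans hφcb.le hbti⟩
    have hfeq : f (φ c) = f c := hcomp c hcIcc
    rcases hfmono i hi with hm | hm
    · exact absurd hfeq (ne_of_gt (hm hcmem hφcmem hφc))
    · exact absurd hfeq (ne_of_lt (hm hcmem hφcmem hφc))
end

section
/- Let n ≥ 1, let f, g : ℝ → ℝ be continuous 1-periodic functions (f(x+1) = f(x) and g(x+1) = g(x) for all x), and let t₀ < t₁ < ⋯ < t_n = t₀ + 1 and s₀ < s₁ < ⋯ < s_n = s₀ + 1 be real numbers such that for each i ∈ {1,…,n}, f is strictly monotone on [t_{i−1}, t_i] and g is strictly monotone on [s_{i−1}, s_i], and f(t_i) = g(s_i) for all i ∈ {0,…,n}. Then there exists a strictly increasing continuous bijection φ : ℝ → ℝ with φ(x+1) = φ(x) + 1 for all x, φ(s_i) = t_i for all i, and f(φ(x)) = g(x) for all x ∈ ℝ. -/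
open Set

lemma aux_mono {f g : ℝ → ℝ} {a b c d : ℝ} (hab : a < b) (hcd : c < d)
    (hfc : ContinuousOn f (Icc a b)) (hgc : ContinuousOn g (Icc c d))
    (hf : StrictMonoOn f (Icc a b)) (hg : StrictMonoOn g (Icc c d))
    (hac : f a = g c) (hbd : f b = g d) :
    ∃ ψ : ℝ → ℝ, StrictMonoOn ψ (Icc c d) ∧ MapsTo ψ (Icc c d) (Icc a b) ∧
      ψ c = a ∧ ψ d = b ∧ (∀ x ∈ Icc c d, f (ψ x) = g x) ∧
      SurjOn ψ (Icc c d) (Icc a b) := by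
  have hamem : a ∈ Icc a b := ⟨le_refl _, hab.le⟩
  have hbmem : b ∈ Icc a b := ⟨hab.le, le_refl _⟩
  have hcmem : c ∈ Icc c d := ⟨le_refl _, hcd.le⟩
  have hdmem : d ∈ Icc c d := ⟨hcd.le, le_refl _⟩
  have hBij : Set.BijOn f (Icc a b) (Icc (f a) (f b)) :=
    ⟨fun x hx => ⟨hf.monotoneOn hamem hx hx.1, hf.monotoneOn hx hbmem hx.2⟩,
      hf.injOn, intermediate_value_Icc hab.le hfc⟩
  set ψ : ℝ → ℝ := fun x => Function.invFunOn f (Icc a b) (g x) with hψdef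
  have hInv := hBij.invOn_invFunOn
  have hgmem : ∀ x ∈ Icc c d, g x ∈ Icc (f a) (f b) := by
    intro x hx
    rw [hac, hbd]
    exact ⟨hg.monotoneOn hcmem hx hx.1, hg.monotoneOn hx hdmem hx.2⟩
  have hmaps : MapsTo ψ (Icc c d) (Icc a b) := by
    intro x hx
    obtain ⟨y, hy, hfy⟩ := hBij.surjOn (hgmem x hx)
    exact Function.invFunOn_mem ⟨y, hy, hfy⟩
  have hfψ : ∀ x ∈ Icc c d, f (ψ x) = g x := fun x hx => hInv.2 (hgmem x hx)
  have hψc : ψ c = a := by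
    apply hf.injOn (hmaps hcmem) hamem
    rw [hfψ c hcmem, hac]
  have hψd : ψ d = b := by
    apply hf.injOn (hmaps hdmem) hbmem
    rw [hfψ d hdmem, hbd]
  have hsm : StrictMonoOn ψ (Icc c d) := by
    intro x hx y hy hxy
    by_contra hle
    push_neg at hle
    have : f (ψ y) ≤ f (ψ x) := hf.monotoneOn (hmaps hy) (hmaps hx) hle
    rw [hfψ x hx, hfψ y hy] at this
    exact absurd (hg hx hy hxy) (not_lt.2 this)
  refine ⟨ψ, hsm, hmaps, hψc, hψd, hfψ, ?_⟩
  intro y hy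
  have : f y ∈ Icc (g c) (g d) := by
    rw [← hac, ← hbd]
    exact ⟨hf.monotoneOn hamem hy hy.1, hf.monotoneOn hy hbmem hy.2⟩
  obtain ⟨x, hx, hgx⟩ := intermediate_value_Icc hcd.le hgc this
  refine ⟨x, hx, hf.injOn (hmaps hx) hy ?_⟩
  rw [hfψ x hx, hgx]

lemma aux_piece {f g : ℝ → ℝ} {a b c d : ℝ} (hab : a < b) (hcd : c < d)
    (hfc : ContinuousOn f (Icc a b)) (hgc : ContinuousOn g (Icc c d))
    (hf : StrictMonoOn f (Icc a b) ∨ StrictAntiOn f (Icc a b))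
    (hg : StrictMonoOn g (Icc c d) ∨ StrictAntiOn g (Icc c d))
    (hac : f a = g c) (hbd : f b = g d) :
    ∃ ψ : ℝ → ℝ, StrictMonoOn ψ (Icc c d) ∧ MapsTo ψ (Icc c d) (Icc a b) ∧
      ψ c = a ∧ ψ d = b ∧ (∀ x ∈ Icc c d, f (ψ x) = g x) ∧
      SurjOn ψ (Icc c d) (Icc a b) := by
  have hamem : a ∈ Icc a b := ⟨le_refl _, hab.le⟩
  have hbmem : b ∈ Icc a b := ⟨hab.le, le_refl _⟩
  have hcmem : c ∈ Icc c d := ⟨le_refl _, hcd.le⟩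
  have hdmem : d ∈ Icc c d := ⟨hcd.le, le_refl _⟩
  rcases hf with hf | hf
  · rcases hg with hg | hg
    · exact aux_mono hab hcd hfc hgc hf hg hac hbd
    · exfalso
      have h1 : f a < f b := hf hamem hbmem hab
      have h2 : g d < g c := hg hcmem hdmem hcd
      rw [hac, hbd] at h1; linarith
  · rcases hg with hg | hg
    · exfalso
      have h1 : f b < f a := hf hamem hbmem hab
      have h2 : g c < g d := hg hcmem hdmem hcd
      rw [hac, hbd] at h1; linarith
    · obtain ⟨ψ, h1, h2, h3, h4, h5, h6⟩ :=
        aux_mono (f := fun x => -f x) (g := fun x => -g x) hab hcd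
          (hfc.neg) (hgc.neg) (hf.neg) (hg.neg) (by simp [hac]) (by simp [hbd])
      exact ⟨ψ, h1, h2, h3, h4, fun x hx => neg_inj.1 (h5 x hx), h6⟩

/-- Two continuous `1`-periodic functions on `ℝ` (i.e. functions on the
circle), piecewise strictly monotone with respect to partitions of a period of
the same length and with matching values at the partition points, differ by
precomposition with a strictly increasing homeomorphism of `ℝ` commuting with
translation by `1` (i.e. an orientation-preserving circle homeomorphism). -/
theorem exists_reparametrization_circle
    (n : ℕ) (hn : 1 ≤ n) (f g : ℝ → ℝ)
    (hfc : Continuous f) (hgc : Continuous g)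
    (hfper : ∀ x, f (x + 1) = f x) (hgper : ∀ x, g (x + 1) = g x)
    (t s : ℕ → ℝ)
    (htmono : ∀ i < n, t i < t (i + 1)) (hsmono : ∀ i < n, s i < s (i + 1))
    (htper : t n = t 0 + 1) (hsper : s n = s 0 + 1)
    (hfmono : ∀ i < n, StrictMonoOn f (Set.Icc (t i) (t (i + 1))) ∨
      StrictAntiOn f (Set.Icc (t i) (t (i + 1))))
    (hgmono : ∀ i < n, StrictMonoOn g (Set.Icc (s i) (s (i + 1))) ∨
      StrictAntiOn g (Set.Icc (s i) (s (i + 1))))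
    (hmatch : ∀ i ≤ n, f (t i) = g (s i)) :
    ∃ φ : ℝ → ℝ,
      StrictMono φ ∧ Continuous φ ∧ Function.Bijective φ ∧
      (∀ x, φ (x + 1) = φ x + 1) ∧
      (∀ i ≤ n, φ (s i) = t i) ∧
      (∀ x, f (φ x) = g x) := by
  classical
  -- strict monotonicity of the partitions on [0, n]
  have hslt : ∀ j ≤ n, ∀ i < j, s i < s j := by
    intro j hjn
    induction j with
    | zero => omega
    | succ k ih =>
      intro i hi
      have hk : k < n := Nat.lt_of_succ_le hjn
      rcases Nat.lt_succ_iff_lt_or_eq.1 hi with h | h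
      · exact lt_trans (ih (by omega) i h) (hsmono k hk)
      · subst h; exact hsmono i hk
  have htlt : ∀ j ≤ n, ∀ i < j, t i < t j := by
    intro j hjn
    induction j with
    | zero => omega
    | succ k ih =>
      intro i hi
      have hk : k < n := Nat.lt_of_succ_le hjn
      rcases Nat.lt_succ_iff_lt_or_eq.1 hi with h | h
      · exact lt_trans (ih (by omega) i h) (htmono k hk)
      · subst h; exact htmono i hk
  have hsle : ∀ i j, i ≤ j → j ≤ n → s i ≤ s j := by
    intro i j hij hjn
    rcases lt_or_eq_of_le hij with h | h
    · exact (hslt j hjn i h).le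
    · rw [h]
  have htle : ∀ i j, i ≤ j → j ≤ n → t i ≤ t j := by
    intro i j hij hjn
    rcases lt_or_eq_of_le hij with h | h
    · exact (htlt j hjn i h).le
    · rw [h]
  -- integer periodicity
  have hfZ : ∀ (k : ℤ) (x : ℝ), f (x + k) = f x := by
    intro k x
    have := (Function.Periodic.int_mul (hfper : Function.Periodic f 1) k) x
    simpa using this
  have hgZ : ∀ (k : ℤ) (x : ℝ), g (x + k) = g x := by
    intro k x
    have := (Function.Periodic.int_mul (hgper : Function.Periodic g 1) k) x
    simpa using this
  -- piecewise inverses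
  have hexists : ∀ i, ∃ ψ : ℝ → ℝ, i < n →
      StrictMonoOn ψ (Icc (s i) (s (i+1))) ∧
      MapsTo ψ (Icc (s i) (s (i+1))) (Icc (t i) (t (i+1))) ∧
      ψ (s i) = t i ∧ ψ (s (i+1)) = t (i+1) ∧
      (∀ x ∈ Icc (s i) (s (i+1)), f (ψ x) = g x) ∧
      SurjOn ψ (Icc (s i) (s (i+1))) (Icc (t i) (t (i+1))) := by
    intro i
    by_cases hi : i < n
    · obtain ⟨ψ, h⟩ := aux_piece (htmono i hi) (hsmono i hi)
        hfc.continuousOn hgc.continuousOn (hfmono i hi) (hgmono i hi)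
        (hmatch i hi.le) (hmatch (i+1) hi)
      exact ⟨ψ, fun _ => h⟩
    · exact ⟨id, fun h => absurd h hi⟩
  choose Ψ hΨ using hexists
  -- index function
  set ind : ℝ → ℕ := fun x => Nat.findGreatest (fun i => s i ≤ x) (n-1) with hinddef
  have hindlt : ∀ x, ind x < n := by
    intro x
    simp only [hinddef]
    exact lt_of_le_of_lt (Nat.findGreatest_le _) (by omega)
  set ψ₀ : ℝ → ℝ := fun x => Ψ (ind x) x with hψ₀def
  have hind_le : ∀ x, s 0 ≤ x → s (ind x) ≤ x := by
    intro x hx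
    simp only [hinddef]
    exact Nat.findGreatest_spec (P := fun i => s i ≤ x) (Nat.zero_le _) hx
  have hind_gt : ∀ x, x < s n → x < s (ind x + 1) := by
    intro x hx
    simp only [hinddef]
    by_cases h : Nat.findGreatest (fun i => s i ≤ x) (n-1) + 1 ≤ n - 1
    · by_contra hle
      push_neg at hle
      exact Nat.findGreatest_is_greatest (P := fun i => s i ≤ x) (Nat.lt_succ_self _) h hle
    · have hEq : Nat.findGreatest (fun i => s i ≤ x) (n-1) + 1 = n := by
        have := Nat.findGreatest_le (P := fun i => s i ≤ x) (n-1)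
        omega
      rw [hEq]; exact hx
  have hind_eq : ∀ i < n, ind (s i) = i := by
    intro i hi
    have h1 : i ≤ ind (s i) := by
      simp only [hinddef]
      exact Nat.le_findGreatest (P := fun j => s j ≤ s i) (by omega) (le_refl _)
    have h2 : ind (s i) ≤ i := by
      by_contra h
      push_neg at h
      have ha : s (ind (s i)) ≤ s i := hind_le (s i) (hsle 0 i (Nat.zero_le _) hi.le)
      have hb : s i < s (ind (s i)) := hslt (ind (s i)) (hindlt (s i)).le i h
      linarith
    omega
  have hmemJ : ∀ x ∈ Ico (s 0) (s n), x ∈ Icc (s (ind x)) (s (ind x + 1)) :=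
    fun x hx => ⟨hind_le x hx.1, (hind_gt x hx.2).le⟩
  -- local facts about ψ₀
  have hψ₀lb : ∀ x ∈ Ico (s 0) (s n), t (ind x) ≤ ψ₀ x := by
    intro x hx
    exact (((hΨ (ind x) (hindlt x)).2.1) (hmemJ x hx)).1
  have hψ₀ub : ∀ x ∈ Ico (s 0) (s n), ψ₀ x < t (ind x + 1) := by
    intro x hx
    have h := hΨ (ind x) (hindlt x)
    have hs1 : s (ind x + 1) ∈ Icc (s (ind x)) (s (ind x + 1)) :=
      ⟨(hsmono (ind x) (hindlt x)).le, le_refl _⟩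
    calc Ψ (ind x) x < Ψ (ind x) (s (ind x + 1)) :=
          h.1 (hmemJ x hx) hs1 (hind_gt x hx.2)
      _ = t (ind x + 1) := h.2.2.2.1
  have hψ₀mem : ∀ x ∈ Ico (s 0) (s n), ψ₀ x ∈ Ico (t 0) (t n) := by
    intro x hx
    constructor
    · exact le_trans (htle 0 (ind x) (Nat.zero_le _) (hindlt x).le) (hψ₀lb x hx)
    · exact lt_of_lt_of_le (hψ₀ub x hx) (htle (ind x + 1) n (hindlt x) (le_refl _))
  have hψ₀mono : ∀ x ∈ Ico (s 0) (s n), ∀ y ∈ Ico (s 0) (s n), x < y → ψ₀ x < ψ₀ y := by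
    intro x hx y hy hxy
    have hile : ind x ≤ ind y := by
      by_contra hc
      push_neg at hc
      have h1 : s (ind y + 1) ≤ s (ind x) := hsle (ind y + 1) (ind x) hc (hindlt x).le
      have h2 : s (ind x) ≤ x := hind_le x hx.1
      have h3 : y < s (ind y + 1) := hind_gt y hy.2
      linarith
    rcases lt_or_eq_of_le hile with h | h
    · have h1 : ψ₀ x < t (ind x + 1) := hψ₀ub x hx
      have h2 : t (ind x + 1) ≤ t (ind y) := htle (ind x + 1) (ind y) h (hindlt y).le
      have h3 : t (ind y) ≤ ψ₀ y := hψ₀lb y hy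
      linarith
    · have hy' : y ∈ Icc (s (ind x)) (s (ind x + 1)) := by rw [h]; exact hmemJ y hy
      have := (hΨ (ind x) (hindlt x)).1 (hmemJ x hx) hy' hxy
      show Ψ (ind x) x < Ψ (ind y) y
      rw [← h]
      exact this
  have hψ₀si : ∀ i < n, ψ₀ (s i) = t i := by
    intro i hi
    show Ψ (ind (s i)) (s i) = t i
    rw [hind_eq i hi]
    exact (hΨ i hi).2.2.1
  have hψ₀f : ∀ x ∈ Ico (s 0) (s n), f (ψ₀ x) = g x := fun x hx =>
    (hΨ (ind x) (hindlt x)).2.2.2.2.1 x (hmemJ x hx)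
  -- surjectivity of ψ₀ onto [t 0, t n)
  have hψ₀surj : ∀ z ∈ Ico (t 0) (t n), ∃ x ∈ Ico (s 0) (s n), ψ₀ x = z := by
    intro z hz
    set i : ℕ := Nat.findGreatest (fun i => t i ≤ z) (n-1) with hidef
    have hi : i < n := by
      rw [hidef]
      exact lt_of_le_of_lt (Nat.findGreatest_le _) (by omega)
    have hz1 : t i ≤ z := by
      rw [hidef]
      exact Nat.findGreatest_spec (P := fun j => t j ≤ z) (Nat.zero_le _) hz.1
    have hz2 : z < t (i + 1) := by
      rw [hidef]
      by_cases h : Nat.findGreatest (fun i => t i ≤ z) (n-1) + 1 ≤ n - 1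
      · by_contra hle
        push_neg at hle
        exact Nat.findGreatest_is_greatest (P := fun j => t j ≤ z)
          (by omega) h hle
      · have hEq : Nat.findGreatest (fun i => t i ≤ z) (n-1) + 1 = n := by
          have := Nat.findGreatest_le (P := fun j => t j ≤ z) (n-1)
          omega
        rw [hEq]; exact hz.2
    obtain ⟨x, hx, hΨx⟩ := (hΨ i hi).2.2.2.2.2 ⟨hz1, hz2.le⟩
    have hxlt : x < s (i+1) := by
      rcases lt_or_eq_of_le hx.2 with h | h
      · exact h
      · exfalso
        rw [h, (hΨ i hi).2.2.2.1] at hΨx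
        linarith
    have hxmem : x ∈ Ico (s 0) (s n) :=
      ⟨le_trans (hsle 0 i (Nat.zero_le _) hi.le) hx.1,
        lt_of_lt_of_le hxlt (hsle (i+1) n hi (le_refl _))⟩
    refine ⟨x, hxmem, ?_⟩
    have hieq : ind x = i := by
      have h1 : i ≤ ind x := by
        simp only [hinddef]
        exact Nat.le_findGreatest (P := fun j => s j ≤ x) (by omega) hx.1
      have h2 : ind x ≤ i := by
        by_contra hc
        push_neg at hc
        have ha : s (i+1) ≤ s (ind x) := hsle (i+1) (ind x) hc (hindlt x).le
        have hb : s (ind x) ≤ x := hind_le x hxmem.1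
        linarith
      omega
    show Ψ (ind x) x = z
    rw [hieq]
    exact hΨx
  -- the global homeomorphism
  set φ : ℝ → ℝ := fun x => ψ₀ (x - (⌊x - s 0⌋ : ℤ)) + (⌊x - s 0⌋ : ℤ) with hφdef
  have hfrac : ∀ x : ℝ, (x - (⌊x - s 0⌋ : ℤ)) ∈ Ico (s 0) (s n) := by
    intro x
    have h1 := Int.floor_le (x - s 0)
    have h2 := Int.lt_floor_add_one (x - s 0)
    constructor
    · linarith
    · rw [hsper]; linarith
  have hequiv : ∀ x, φ (x + 1) = φ x + 1 := by
    intro x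
    have hfl : ⌊x + 1 - s 0⌋ = ⌊x - s 0⌋ + 1 := by
      rw [show x + 1 - s 0 = (x - s 0) + (1:ℤ) by push_cast; ring, Int.floor_add_intCast]
    show ψ₀ (x + 1 - (⌊x + 1 - s 0⌋ : ℤ)) + (⌊x + 1 - s 0⌋ : ℤ)
        = ψ₀ (x - (⌊x - s 0⌋ : ℤ)) + (⌊x - s 0⌋ : ℤ) + 1
    rw [hfl]
    have : x + 1 - ((⌊x - s 0⌋ + 1 : ℤ) : ℝ) = x - (⌊x - s 0⌋ : ℤ) := by
      push_cast; ring
    rw [this]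
    push_cast; ring
  have hmono : StrictMono φ := by
    intro x y hxy
    have hm : ⌊x - s 0⌋ ≤ ⌊y - s 0⌋ := Int.floor_le_floor (by linarith)
    rcases lt_or_eq_of_le hm with h | h
    · have h1 : ψ₀ (x - (⌊x - s 0⌋ : ℤ)) < t n := (hψ₀mem _ (hfrac x)).2
      have h2 : t 0 ≤ ψ₀ (y - (⌊y - s 0⌋ : ℤ)) := (hψ₀mem _ (hfrac y)).1
      have h3 : ((⌊x - s 0⌋ : ℤ) : ℝ) + 1 ≤ ((⌊y - s 0⌋ : ℤ) : ℝ) := by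
        exact_mod_cast Int.add_one_le_iff.2 h
      rw [htper] at h1
      show ψ₀ (x - (⌊x - s 0⌋ : ℤ)) + (⌊x - s 0⌋ : ℤ)
          < ψ₀ (y - (⌊y - s 0⌋ : ℤ)) + (⌊y - s 0⌋ : ℤ)
      linarith
    · show ψ₀ (x - (⌊x - s 0⌋ : ℤ)) + (⌊x - s 0⌋ : ℤ)
          < ψ₀ (y - (⌊y - s 0⌋ : ℤ)) + (⌊y - s 0⌋ : ℤ)
      rw [← h]
      have hmem2 : (y - (⌊x - s 0⌋ : ℤ)) ∈ Ico (s 0) (s n) := by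
        have := hfrac y; rw [← h] at this; exact this
      have := hψ₀mono _ (hfrac x) _ hmem2 (by linarith : x - (⌊x - s 0⌋:ℤ) < y - (⌊x - s 0⌋:ℤ))
      linarith
  have hsurj : Function.Surjective φ := by
    intro z
    have h1 := Int.floor_le (z - t 0)
    have h2 := Int.lt_floor_add_one (z - t 0)
    set m : ℤ := ⌊z - t 0⌋ with hmdef
    have hzmem : z - (m : ℝ) ∈ Ico (t 0) (t n) := by
      constructor
      · linarith
      · rw [htper]; linarith
    obtain ⟨x, hx, hψx⟩ := hψ₀surj _ hzmem
    refine ⟨x + m, ?_⟩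
    have hfl0 : ⌊x - s 0⌋ = 0 := by
      rw [Int.floor_eq_zero_iff]
      constructor
      · linarith [hx.1]
      · have := hx.2; rw [hsper] at this; simp; linarith
    have hfl : ⌊x + (m:ℝ) - s 0⌋ = m := by
      rw [show x + (m:ℝ) - s 0 = (x - s 0) + m by ring, Int.floor_add_intCast, hfl0, zero_add]
    show ψ₀ (x + (m:ℝ) - (⌊x + (m:ℝ) - s 0⌋ : ℤ)) + (⌊x + (m:ℝ) - s 0⌋ : ℤ) = z
    rw [hfl]
    rw [show x + (m:ℝ) - (m:ℝ) = x by ring]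
    rw [hψx]
    ring
  have hbij : Function.Bijective φ := ⟨hmono.injective, hsurj⟩
  have hcont : Continuous φ := by
    exact (StrictMono.orderIsoOfSurjective φ hmono hsurj).continuous
  have hφsi : ∀ i ≤ n, φ (s i) = t i := by
    intro i hi
    rcases lt_or_eq_of_le hi with h | h
    · have hfl0 : ⌊s i - s 0⌋ = 0 := by
        rw [Int.floor_eq_zero_iff]
        constructor
        · linarith [hsle 0 i (Nat.zero_le _) hi]
        · have h2 : s i < s n := hslt n (le_refl _) i h
          rw [hsper] at h2; simp; linarith
      show ψ₀ (s i - (⌊s i - s 0⌋ : ℤ)) + (⌊s i - s 0⌋ : ℤ) = t i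
      rw [hfl0]
      simp
      exact hψ₀si i h
    · subst h
      rw [hsper, hequiv (s 0)]
      have h0 : φ (s 0) = t 0 := by
        have hfl0 : ⌊s 0 - s 0⌋ = 0 := by simp
        show ψ₀ (s 0 - (⌊s 0 - s 0⌋ : ℤ)) + (⌊s 0 - s 0⌋ : ℤ) = t 0
        rw [hfl0]
        simp
        exact hψ₀si 0 (by omega)
      rw [h0, htper]
  have hφf : ∀ x, f (φ x) = g x := by
    intro x
    set m : ℤ := ⌊x - s 0⌋ with hmdef
    show f (ψ₀ (x - (m:ℝ)) + (m:ℝ)) = g x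
    calc f (ψ₀ (x - (m:ℝ)) + (m:ℝ)) = f (ψ₀ (x - (m:ℝ))) := hfZ m _
      _ = g (x - (m:ℝ)) := hψ₀f _ (hfrac x)
      _ = g (x - (m:ℝ) + (m:ℝ)) := (hgZ m _).symm
      _ = g x := by rw [show x - (m:ℝ) + (m:ℝ) = x by ring]
  exact ⟨φ, hmono, hcont, hbij, hequiv, hφsi, hφf⟩
end
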